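/- Let (a_k)_{k=0}^{N} and (b_k)_{k=1}^{N} be nonnegative reals, τ > 0, h > 0 with M := h/τ ∈ ℕ, M ≤ N. Suppose a_k = a₀ for k ≤ 0 extended by convention, and define Π_l := ⟨δ_l − δ_{l−M}, δ_l⟩ for a sequence (δ_l) in a real inner product space V with δ_m = v₀ fixed for m ∈ {−M+1, …, 0}. Then Σ_{l=1}^{k} 2τ Π_l = Σ_{l=1}^{k} τ ‖δ_l − δ_{l−M}‖² + Σ_{l=k−M+1}^{k} τ ‖δ_l‖² − h ‖v₀‖² for every k with M ≤ k ≤ N. -/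

import Mathlib

theorem stmt13 {V : Type*} [NormedAddCommGroup V] [InnerProductSpace ℝ V]
    (τ h : ℝ) (hτ : 0 < τ) (M : ℤ) (hM : 1 ≤ M) (hh : h = M * τ)
    (δ : ℤ → V) (v₀ : V) (hδ : ∀ m : ℤ, 1 - M ≤ m → m ≤ 0 → δ m = v₀)
    (k : ℤ) (hk : M ≤ k) :
    ∑ l ∈ Finset.Icc 1 k, 2 * τ * (inner ℝ (δ l - δ (l - M)) (δ l) : ℝ) =
      (∑ l ∈ Finset.Icc 1 k, τ * ‖δ l - δ (l - M)‖^2) +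
        (∑ l ∈ Finset.Icc (k - M + 1) k, τ * ‖δ l‖^2) - h * ‖v₀‖^2 := by
  have key : ∀ l : ℤ, 2 * τ * (inner ℝ (δ l - δ (l - M)) (δ l) : ℝ)
      = τ * ‖δ l - δ (l - M)‖^2 + (τ * ‖δ l‖^2 - τ * ‖δ (l - M)‖^2) := by
    intro l
    have h1 : ‖δ l - δ (l - M)‖^2
        = ‖δ l‖^2 - 2 * inner ℝ (δ l) (δ (l - M)) + ‖δ (l - M)‖^2 :=
      norm_sub_sq_real _ _
    have h2 : (inner ℝ (δ l - δ (l - M)) (δ l) : ℝ)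
        = ‖δ l‖^2 - inner ℝ (δ l) (δ (l - M)) := by
      rw [inner_sub_left, real_inner_self_eq_norm_sq, real_inner_comm]
    rw [h1, h2]; ring
  simp only [key]
  rw [Finset.sum_add_distrib, Finset.sum_sub_distrib]
  have hIcc : ∀ a b : ℤ, Finset.Icc (a + 1) b = Finset.Ioc a b := by
    intro a b; ext x; simp [Int.add_one_le_iff]
  have e1 : Finset.Icc (1 : ℤ) k = Finset.Ioc 0 k := hIcc 0 k
  have e2 : Finset.Icc (k - M + 1) k = Finset.Ioc (k - M) k := hIcc (k - M) k
  -- shift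
  have hshift : ∑ l ∈ Finset.Icc 1 k, τ * ‖δ (l - M)‖^2
      = ∑ l ∈ Finset.Ioc (-M) (k - M), τ * ‖δ l‖^2 := by
    rw [e1, show (0:ℤ) = -M + M by ring, show k = k - M + M by ring,
      ← Finset.map_add_right_Ioc, Finset.sum_map]
    simp only [addRightEmbedding_apply, add_sub_cancel_right]
  have hsplit1 : ∑ l ∈ Finset.Ioc (0:ℤ) (k - M), τ * ‖δ l‖^2
      + ∑ l ∈ Finset.Ioc (k - M) k, τ * ‖δ l‖^2
      = ∑ l ∈ Finset.Ioc (0:ℤ) k, τ * ‖δ l‖^2 :=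
    by rw [← Finset.sum_union (by
          rw [Finset.disjoint_left]; intro x hx hx'
          simp only [Finset.mem_Ioc] at hx hx'; omega),
        Finset.Ioc_union_Ioc_eq_Ioc (by omega : (0:ℤ) ≤ k - M) (by omega)]
  have hsplit2 : ∑ l ∈ Finset.Ioc (-M) (0:ℤ), τ * ‖δ l‖^2
      + ∑ l ∈ Finset.Ioc (0:ℤ) (k - M), τ * ‖δ l‖^2
      = ∑ l ∈ Finset.Ioc (-M) (k - M), τ * ‖δ l‖^2 :=
    by rw [← Finset.sum_union (by
          rw [Finset.disjoint_left]; intro x hx hx'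
          simp only [Finset.mem_Ioc] at hx hx'; omega),
        Finset.Ioc_union_Ioc_eq_Ioc (by omega : -M ≤ (0:ℤ)) (by omega)]
  have hconst : ∑ l ∈ Finset.Ioc (-M) (0:ℤ), τ * ‖δ l‖^2 = h * ‖v₀‖^2 := by
    have hc : ∀ l ∈ Finset.Ioc (-M) (0:ℤ), τ * ‖δ l‖^2 = τ * ‖v₀‖^2 := by
      intro l hl
      simp only [Finset.mem_Ioc] at hl
      rw [hδ l (by omega) hl.2]
    rw [Finset.sum_congr rfl hc, Finset.sum_const, Int.card_Ioc, nsmul_eq_mul]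
    have : (((0 - -M).toNat : ℕ) : ℝ) = (M : ℝ) :=
      mod_cast (by omega : (((0 - -M).toNat : ℕ) : ℤ) = M)
    rw [this, hh]; ring
  rw [e1, e2] at *
  rw [hshift, ← hsplit1, ← hsplit2]
  rw [hconst] at *
  ring
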